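/- For every n ≥ 1 and all rationals q₁, …, q_n, the set of all f ∈ Aut(ℚ,<) such that for every q ∈ ℚ there exists i ≤ n with f(q_i + q) ≠ q_i + q (i.e., f fixes no translate {q₁+q, …, q_n+q} pointwise) is nowhere dense in Aut(ℚ,<) with the topology of pointwise convergence. -/

import Mathlib

open Topology


/-- The topology of pointwise convergence on the permutation group of a set `V`
(regarded as a discrete space): the topology induced from the product topology
on `V → V` where `V` carries the discrete topology. -/
instance permPointwiseTopology (V : Type*) : TopologicalSpace (Equiv.Perm V) :=
  TopologicalSpace.induced (fun g : Equiv.Perm V => (g : V → V))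
    (@Pi.topologicalSpace V (fun _ => V) (fun _ => ⊥))

/-- The automorphism group of a binary relational structure `(V, r)`, realized as the
subgroup of `Equiv.Perm V` of permutations preserving the relation `r` in both directions. -/
def relAut {V : Type*} (r : V → V → Prop) : Subgroup (Equiv.Perm V) where
  carrier := {g : Equiv.Perm V | ∀ x y : V, r (g x) (g y) ↔ r x y}
  one_mem' := fun _ _ => Iff.rfl
  mul_mem' := by
    intro a b ha hb x y
    exact (ha (b x) (b y)).trans (hb x y)
  inv_mem' := by
    intro a ha x y
    have h := (ha (a⁻¹ x) (a⁻¹ y)).symm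
    simpa using h

/-- For every `n ≥ 1` and rationals `q₁, …, q_n`, the set of order automorphisms
`f ∈ Aut(ℚ, <)` fixing no translate `{q₁ + q, …, q_n + q}` pointwise is nowhere dense
in `Aut(ℚ, <)` with the topology of pointwise convergence. -/

def plFun (c r : ℚ) (t : ℚ) : ℚ := if t ≤ c then t else c + r * (t - c)

lemma plFun_strictMono (c r : ℚ) (hr : 0 < r) : StrictMono (plFun c r) := by
  intro x y hxy
  unfold plFun
  rcases le_or_gt x c with hx | hx <;> rcases le_or_gt y c with hy | hy
  · simpa [hx, hy]
  · rw [if_pos hx, if_neg (not_le.2 hy)]; nlinarith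
  · linarith
  · rw [if_neg (not_le.2 hx), if_neg (not_le.2 hy)]; nlinarith

lemma plFun_surjective (c r : ℚ) (hr : 0 < r) : Function.Surjective (plFun c r) := by
  intro y
  rcases le_or_gt y c with hy | hy
  · exact ⟨y, by simp [plFun, hy]⟩
  · refine ⟨c + r⁻¹ * (y - c), ?_⟩
    have h1 : c < c + r⁻¹ * (y - c) := by
      have := mul_pos (inv_pos.2 hr) (sub_pos.2 hy)
      linarith
    unfold plFun
    rw [if_neg (not_le.2 h1)]
    field_simp
    ring

/-- Piecewise-linear order automorphism of ℚ: identity on `(-∞, c]`, slope `r` above `c`. -/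
noncomputable def stretch (c r : ℚ) (hr : 0 < r) : ℚ ≃o ℚ :=
  StrictMono.orderIsoOfSurjective (plFun c r) (plFun_strictMono c r hr) (plFun_surjective c r hr)

lemma stretch_apply (c r : ℚ) (hr : 0 < r) (t : ℚ) : stretch c r hr t = plFun c r t :=
  congrFun (StrictMono.coe_orderIsoOfSurjective _ _ (plFun_surjective c r hr)) t

lemma stretch_apply_of_le (c r : ℚ) (hr : 0 < r) {t : ℚ} (h : t ≤ c) :
    stretch c r hr t = t := by rw [stretch_apply]; simp [plFun, h]

lemma stretch_apply_of_lt (c r : ℚ) (hr : 0 < r) {t : ℚ} (h : c < t) :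
    stretch c r hr t = c + r * (t - c) := by
  rw [stretch_apply]; simp [plFun, not_le.2 h]

/-- Any finite order-preserving partial map on ℚ extends to an order automorphism. -/
lemma exists_orderIso_extend (s : Finset ℚ) (p : ℚ → ℚ)
    (hp : ∀ x ∈ s, ∀ y ∈ s, x < y → p x < p y) :
    ∃ g : ℚ ≃o ℚ, ∀ x ∈ s, g x = p x := by
  induction s using Finset.strongInduction with
  | _ s ih =>
    rcases s.eq_empty_or_nonempty with rfl | hs
    · exact ⟨OrderIso.refl ℚ, by simp⟩
    · have hMs : s.max' hs ∈ s := s.max'_mem hs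
      obtain ⟨g', hg'⟩ := ih (s.erase (s.max' hs)) (s.erase_ssubset hMs) (fun x hx y hy hxy =>
        hp x (Finset.mem_of_mem_erase hx) y (Finset.mem_of_mem_erase hy) hxy)
      have hlt : ∀ x ∈ s.erase (s.max' hs), x < s.max' hs := fun x hx =>
        lt_of_le_of_ne (s.le_max' x (Finset.mem_of_mem_erase hx)) (Finset.ne_of_mem_erase hx)
      have hc : ∃ c : ℚ, (∀ x ∈ s.erase (s.max' hs), p x ≤ c) ∧ c < g' (s.max' hs) ∧
          c < p (s.max' hs) := by
        rcases (s.erase (s.max' hs)).eq_empty_or_nonempty with h0 | h0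
        · refine ⟨min (g' (s.max' hs)) (p (s.max' hs)) - 1, by simp [h0], ?_, ?_⟩
          · linarith [min_le_left (g' (s.max' hs)) (p (s.max' hs))]
          · linarith [min_le_right (g' (s.max' hs)) (p (s.max' hs))]
        · have hms' : (s.erase (s.max' hs)).max' h0 ∈ s.erase (s.max' hs) :=
            Finset.max'_mem _ h0
          have hms : (s.erase (s.max' hs)).max' h0 ∈ s := Finset.mem_of_mem_erase hms'
          refine ⟨p ((s.erase (s.max' hs)).max' h0), fun x hx => ?_, ?_,
            hp _ hms _ hMs (hlt _ hms')⟩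
          · rcases eq_or_lt_of_le (Finset.le_max' _ x hx) with h | h
            · exact le_of_eq (by rw [h])
            · exact le_of_lt (hp x (Finset.mem_of_mem_erase hx) _ hms h)
          · rw [← hg' _ hms']
            exact g'.strictMono (hlt _ hms')
      obtain ⟨c, hc1, hc2, hc3⟩ := hc
      have hrpos : 0 < (p (s.max' hs) - c) / (g' (s.max' hs) - c) :=
        div_pos (by linarith) (by linarith)
      refine ⟨g'.trans (stretch c _ hrpos), fun x hx => ?_⟩
      rcases eq_or_ne x (s.max' hs) with h | hne
      · rw [h]
        simp only [OrderIso.trans_apply]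
        rw [stretch_apply_of_lt c _ hrpos hc2]
        have hne : g' (s.max' hs) - c ≠ 0 := by linarith
        field_simp
        ring
      · have hx' : x ∈ s.erase (s.max' hs) := Finset.mem_erase.2 ⟨hne, hx⟩
        simp only [OrderIso.trans_apply, hg' x hx']
        exact stretch_apply_of_le c _ hrpos (hc1 x hx')

theorem nowhereDense_fixing_no_translate
    (n : ℕ) (hn : 1 ≤ n) (qs : Fin n → ℚ) :
    IsNowhereDense {f : relAut (fun a b : ℚ => a < b) |
      ∀ q : ℚ, ∃ i : Fin n, (f : Equiv.Perm ℚ) (qs i + q) ≠ qs i + q} := by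
  set r := fun a b : ℚ => a < b with hr
  set S : Set ↥(relAut r) := {f : relAut r |
      ∀ q : ℚ, ∃ i : Fin n, (f : Equiv.Perm ℚ) (qs i + q) ≠ qs i + q} with hS
  set PiT : TopologicalSpace (ℚ → ℚ) := @Pi.topologicalSpace ℚ (fun _ => ℚ) (fun _ => ⊥)
    with hPiT
  set ι : ↥(relAut r) → (ℚ → ℚ) := fun g => ((g : Equiv.Perm ℚ) : ℚ → ℚ) with hι
  have htop : (inferInstance : TopologicalSpace ↥(relAut r)) =
      TopologicalSpace.induced ι PiT := by
    show TopologicalSpace.induced Subtype.val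
      (TopologicalSpace.induced (fun g : Equiv.Perm ℚ => (g : ℚ → ℚ)) PiT) = _
    rw [induced_compose]
    rfl
  show interior (closure S) = ∅
  rw [Set.eq_empty_iff_forall_notMem]
  intro f₀ hf₀
  -- extract a basic cylinder around f₀ inside the closure
  have hopen : @IsOpen _ (TopologicalSpace.induced ι PiT) (interior (closure S)) :=
    htop ▸ isOpen_interior
  rw [isOpen_induced_iff] at hopen
  obtain ⟨W, hWopen, hWpre⟩ := hopen
  have hf₀W : ι f₀ ∈ W := by rw [← Set.mem_preimage, hWpre]; exact hf₀
  rw [@isOpen_pi_iff ℚ (fun _ => ℚ) (fun _ => ⊥)] at hWopen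
  obtain ⟨I, u, hu, hsub⟩ := hWopen (ι f₀) hf₀W
  -- a bound above everything mentioned
  obtain ⟨B, hB⟩ : ∃ B : ℚ, ∀ x ∈ I, x < B ∧ ι f₀ x < B := by
    classical
    set J : Finset ℚ := insert (0:ℚ) (I ∪ I.image (ι f₀)) with hJ
    refine ⟨J.max' ⟨0, Finset.mem_insert_self _ _⟩ + 1, fun x hx => ⟨?_, ?_⟩⟩
    · have hxJ : x ∈ J := Finset.mem_insert_of_mem (Finset.mem_union_left _ hx)
      have := Finset.le_max' J x hxJ
      linarith
    · have hxJ : ι f₀ x ∈ J :=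
        Finset.mem_insert_of_mem (Finset.mem_union_right _ (Finset.mem_image_of_mem _ hx))
      have := Finset.le_max' J (ι f₀ x) hxJ
      linarith
  -- choose the translation amount q
  have hne : (Finset.image qs Finset.univ).Nonempty :=
    ⟨qs ⟨0, hn⟩, Finset.mem_image_of_mem _ (Finset.mem_univ _)⟩
  set m := (Finset.image qs Finset.univ).min' hne with hm
  set q : ℚ := B + 1 - m with hq
  have hTgt : ∀ i : Fin n, B < qs i + q := by
    intro i
    have : m ≤ qs i := Finset.min'_le _ _ (Finset.mem_image_of_mem _ (Finset.mem_univ _))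
    rw [hq]; linarith
  set T : Finset ℚ := Finset.image (fun i => qs i + q) Finset.univ with hT
  have hTB : ∀ t ∈ T, B < t := by
    intro t ht
    obtain ⟨i, -, rfl⟩ := Finset.mem_image.1 ht
    exact hTgt i
  -- the partial map to extend
  classical
  set p : ℚ → ℚ := fun x => if x ∈ I then ι f₀ x else x with hp
  have hf₀mono : ∀ x y : ℚ, x < y → ι f₀ x < ι f₀ y := by
    intro x y hxy
    exact (f₀.prop x y).2 hxy
  have hmono : ∀ x ∈ I ∪ T, ∀ y ∈ I ∪ T, x < y → p x < p y := by
    intro x hx y hy hxy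
    rw [hp]
    by_cases hxI : x ∈ I
    · by_cases hyI : y ∈ I
      · simpa [hxI, hyI] using hf₀mono x y hxy
      · have hyT : y ∈ T := (Finset.mem_union.1 hy).resolve_left hyI
        have := (hB x hxI).2
        have := hTB y hyT
        simp only [if_pos hxI, if_neg hyI]
        linarith
    · have hxT : x ∈ T := (Finset.mem_union.1 hx).resolve_left hxI
      have hxB := hTB x hxT
      have hyI : y ∉ I := fun hyI => absurd hxy (not_lt.2 (by linarith [(hB y hyI).1]))
      simpa [hxI, hyI] using hxy
  obtain ⟨g, hg⟩ := exists_orderIso_extend (I ∪ T) p hmono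
  have hgI : ∀ x ∈ I, g x = ι f₀ x := by
    intro x hx
    rw [hg x (Finset.mem_union_left _ hx), hp]; simp [hx]
  have hgT : ∀ t ∈ T, g t = t := by
    intro t ht
    have htI : t ∉ I := fun htI => absurd (hB t htI).1 (not_lt.2 (le_of_lt (hTB t ht)))
    rw [hg t (Finset.mem_union_right _ ht), hp]; simp [htI]
  -- the automorphism G
  have hmem : g.toEquiv ∈ relAut r := fun x y => g.lt_iff_lt
  set G : ↥(relAut r) := ⟨g.toEquiv, hmem⟩ with hG
  have hιG : ι G = ⇑g := rfl
  -- G lies in the closure of S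
  have hGcl : G ∈ closure S := by
    have : G ∈ interior (closure S) := by
      rw [← hWpre, Set.mem_preimage]
      apply hsub
      rw [Set.mem_pi]
      intro a ha
      rw [hιG]
      rw [hgI a ha]
      exact (hu a ha).2
    exact interior_subset this
  -- but G has an open neighbourhood avoiding S
  set P : Set (ℚ → ℚ) := Set.pi (↑T) (fun x => ({x} : Set ℚ)) with hP
  have hPopen : @IsOpen _ PiT P := by
    refine @isOpen_set_pi ℚ (fun _ => ℚ) (fun _ => ⊥) _ _ T.finite_toSet (fun a _ => ?_)
    exact @isOpen_discrete ℚ ⊥ (discreteTopology_bot ℚ) _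
  have hcont : @Continuous _ _ _ PiT ι :=
    Continuous.comp (@continuous_induced_dom (Equiv.Perm ℚ) _ _ PiT) continuous_subtype_val
  have hOopen : IsOpen (ι ⁻¹' P) := hcont.isOpen_preimage P hPopen
  have hGO : G ∈ ι ⁻¹' P := by
    rw [Set.mem_preimage, hιG, hP, Set.mem_pi]
    intro a ha
    simpa using hgT a ha
  obtain ⟨h, hhO, hhS⟩ := (mem_closure_iff.1 hGcl) _ hOopen hGO
  obtain ⟨i, hi⟩ := hhS q
  apply hi
  have : qs i + q ∈ T := Finset.mem_image_of_mem _ (Finset.mem_univ i)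
  have := (Set.mem_pi.1 hhO) _ (by exact_mod_cast this)
  simpa using this
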